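/- Let G = diag(g₁, g₂, g₃) be a diagonal real 3×3 matrix with 0 < g₁ < g₂ < g₃, and let U ∈ O(3). Then for every Q ∈ SO(3) one has tr(G (I₃ − Uᵀ Q U)) ≤ 2 (g₂ + g₃), and equality holds for Q = U D₁ Uᵀ, where D₁ = 2 e₁ e₁ᵀ − I₃ and e₁ is the first standard basis vector of ℝ³. Hence the global maximum of Q ↦ tr(G(I₃ − UᵀQU)) over SO(3) equals 2(g₂ + g₃), the sum of the two largest diagonal entries, doubled. -/
import Mathlib


open Matrix

set_option maxHeartbeats 1600000

lemma so3_diag (p : Matrix (Fin 3) (Fin 3) ℝ) (hp : pᵀ * p = 1) (hdet : p.det = 1) :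
    0 ≤ 1 + p 0 0 + p 1 1 + p 2 2 ∧ 0 ≤ 1 - p 0 0 + p 1 1 - p 2 2 ∧
      0 ≤ 1 - p 0 0 - p 1 1 + p 2 2 := by
  have hp' : p * pᵀ = 1 := mul_eq_one_comm.mp hp
  have hadj : p.adjugate = pᵀ := by
    have h : pᵀ * (p * p.adjugate) = pᵀ := by
      rw [Matrix.mul_adjugate, hdet, one_smul, mul_one]
    rwa [← mul_assoc, hp, one_mul] at h
  have hC := Matrix.ext_iff.mpr hadj
  have hC00 := hC 0 0
  have hC11 := hC 1 1
  have hC22 := hC 2 2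
  simp [Matrix.adjugate_fin_three] at hC00 hC11 hC22
  have hcol := Matrix.ext_iff.mpr hp
  have hrow := Matrix.ext_iff.mpr hp'
  have hc0 := hcol 0 0; have hc1 := hcol 1 1; have hc2 := hcol 2 2
  have hr0 := hrow 0 0; have hr1 := hrow 1 1; have hr2 := hrow 2 2
  simp [Matrix.mul_apply, Fin.sum_univ_three, Matrix.one_apply] at hc0 hc1 hc2 hr0 hr1 hr2
  have h3t : p 0 0 + p 1 1 + p 2 2 ≤ 3 := by
    nlinarith [sq_nonneg (p 0 0 - 1), sq_nonneg (p 1 1 - 1), sq_nonneg (p 2 2 - 1),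
      sq_nonneg (p 1 0), sq_nonneg (p 2 0), sq_nonneg (p 0 1), sq_nonneg (p 2 1),
      sq_nonneg (p 0 2), sq_nonneg (p 1 2), hc0, hc1, hc2]
  have id0 : (1 + p 0 0 + p 1 1 + p 2 2) * (3 - (p 0 0 + p 1 1 + p 2 2)) =
      (p 2 1 - p 1 2)^2 + (p 0 2 - p 2 0)^2 + (p 1 0 - p 0 1)^2 := by
    linear_combination (-2 : ℝ)*hC00 - 2*hC11 - 2*hC22 - hr0 - hr1 - hr2
  have id2 : (1 - p 0 0 + p 1 1 - p 2 2) * (3 - (p 0 0 + p 1 1 + p 2 2)) =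
      (1 - p 0 0 + p 1 1 - p 2 2)^2 + (p 0 1 + p 1 0)^2 + (p 1 2 + p 2 1)^2 := by
    linear_combination (2 : ℝ)*hC00 + 2*hC22 - hr1 - hc1
  have id3 : (1 - p 0 0 - p 1 1 + p 2 2) * (3 - (p 0 0 + p 1 1 + p 2 2)) =
      (1 - p 0 0 - p 1 1 + p 2 2)^2 + (p 0 2 + p 2 0)^2 + (p 1 2 + p 2 1)^2 := by
    linear_combination (2 : ℝ)*hC00 + 2*hC11 - hr2 - hc2
  refine ⟨?_, ?_, ?_⟩
  · nlinarith [id0, sq_nonneg (1 + p 0 0 + p 1 1 + p 2 2), sq_nonneg (p 2 1 - p 1 2),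
      sq_nonneg (p 0 2 - p 2 0), sq_nonneg (p 1 0 - p 0 1)]
  · nlinarith [id2, h3t, sq_nonneg (p 0 1 + p 1 0), sq_nonneg (p 1 2 + p 2 1)]
  · nlinarith [id3, h3t, sq_nonneg (p 0 2 + p 2 0), sq_nonneg (p 1 2 + p 2 1)]


/-- The matrix `D i = 2 eᵢ eᵢᵀ − I₃`. -/
def Dmat (i : Fin 3) : Matrix (Fin 3) (Fin 3) ℝ :=
  (2 : ℝ) • vecMulVec (Pi.single i 1) (Pi.single i 1) - 1

/-- For `G = diag(g₁,g₂,g₃)` with `0 < g₁ < g₂ < g₃` and `U ∈ O(3)`,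
`tr(G(I₃ − UᵀQU)) ≤ 2(g₂ + g₃)` for every `Q ∈ SO(3)`, with equality at
`Q = U D₁ Uᵀ`; hence the global maximum over `SO(3)` is `2(g₂ + g₃)`. -/
theorem global_max_error_function
    (g : Fin 3 → ℝ) (h0 : 0 < g 0) (h01 : g 0 < g 1) (h12 : g 1 < g 2)
    (U : Matrix (Fin 3) (Fin 3) ℝ) (hU : Uᵀ * U = 1) :
    (∀ Q : Matrix (Fin 3) (Fin 3) ℝ, Qᵀ * Q = 1 → Q.det = 1 →
        (diagonal g * (1 - Uᵀ * Q * U)).trace ≤ 2 * (g 1 + g 2)) ∧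
    (diagonal g * (1 - Uᵀ * (U * Dmat 0 * Uᵀ) * U)).trace = 2 * (g 1 + g 2) := by

  have hUU : U * Uᵀ = 1 := mul_eq_one_comm.mp hU
  constructor
  · intro Q hQ hQdet
    have hPorth : (Uᵀ * Q * U)ᵀ * (Uᵀ * Q * U) = 1 := by
      calc (Uᵀ * Q * U)ᵀ * (Uᵀ * Q * U)
          = Uᵀ * (Qᵀ * (U * (Uᵀ * (Q * U)))) := by
            simp [Matrix.transpose_mul, Matrix.mul_assoc]
        _ = Uᵀ * (Qᵀ * ((U * Uᵀ) * (Q * U))) := by rw [Matrix.mul_assoc]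
        _ = Uᵀ * (Qᵀ * (Q * U)) := by rw [hUU, one_mul]
        _ = Uᵀ * ((Qᵀ * Q) * U) := by rw [Matrix.mul_assoc]
        _ = Uᵀ * U := by rw [hQ, one_mul]
        _ = 1 := hU
    have hdU : U.det * U.det = 1 := by
      have h := congrArg Matrix.det hU
      simpa [Matrix.det_mul, Matrix.det_transpose] using h
    have hPdet : (Uᵀ * Q * U).det = 1 := by
      simp only [Matrix.det_mul, Matrix.det_transpose, hQdet]
      linear_combination hdU
    obtain ⟨A0, A2, A3⟩ := so3_diag (Uᵀ * Q * U) hPorth hPdet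
    have htr : (diagonal g * (1 - Uᵀ * Q * U)).trace =
        g 0 * (1 - (Uᵀ * Q * U) 0 0) + g 1 * (1 - (Uᵀ * Q * U) 1 1) +
          g 2 * (1 - (Uᵀ * Q * U) 2 2) := by
      simp [Matrix.trace, Matrix.diag, Matrix.mul_apply, Matrix.diagonal,
        Fin.sum_univ_three, Matrix.sub_apply, Matrix.one_apply]
    rw [htr]
    nlinarith [mul_nonneg A0 (by linarith : (0:ℝ) ≤ g 1 + g 2),
      mul_nonneg A2 (by linarith : (0:ℝ) ≤ g 1 - g 0),
      mul_nonneg A3 (by linarith : (0:ℝ) ≤ g 2 - g 0)]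
  · have hD : Uᵀ * (U * Dmat 0 * Uᵀ) * U = Dmat 0 := by
      calc Uᵀ * (U * Dmat 0 * Uᵀ) * U
          = Uᵀ * (U * (Dmat 0 * (Uᵀ * U))) := by simp [Matrix.mul_assoc]
        _ = Uᵀ * (U * Dmat 0) := by rw [hU, mul_one]
        _ = (Uᵀ * U) * Dmat 0 := by rw [Matrix.mul_assoc]
        _ = Dmat 0 := by rw [hU, one_mul]
    rw [hD]
    simp [Dmat, Matrix.trace, Matrix.diag, Matrix.mul_apply, Matrix.diagonal,
      Fin.sum_univ_three, Matrix.sub_apply, Matrix.one_apply, Matrix.vecMulVec_apply,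
      Pi.single, Function.update]
    ring
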